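/- Let B > 0 and let λ be a nonzero real number. If f is continuous on [0,B] and satisfies the homogeneous Volterra equation λ·f(ξ) = ∫₀^ξ (ξ−x)·f(x) dx for all ξ ∈ [0,B], then f(ξ) = 0 for all ξ ∈ [0,B]. In other words, the restricted put operator γ* admits no eigenvectors. -/

import Mathlib

open MeasureTheory Set

/-- If `λ ≠ 0` and `f` is continuous on `[0,B]` with
`λ f(ξ) = ∫₀^ξ (ξ−x) f(x) dx` for all `ξ ∈ [0,B]`, then `f ≡ 0` on `[0,B]`:
the restricted put operator `γ*` admits no eigenvectors. -/
theorem stmt_7 (B : ℝ) (hB : 0 < B) (l : ℝ) (hl : l ≠ 0) (f : ℝ → ℝ)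
    (hf : ContinuousOn f (Icc (0:ℝ) B))
    (heig : ∀ ξ ∈ Icc (0:ℝ) B, l * f ξ = ∫ x in (0:ℝ)..ξ, (ξ - x) * f x) :
    ∀ ξ ∈ Icc (0:ℝ) B, f ξ = 0 := by
  set g : ℝ → ℝ := fun x => |IccExtend hB.le ((Icc (0:ℝ) B).restrict f) x| with hgdef
  have hgc : Continuous g := (Continuous.Icc_extend' (hf.restrict)).abs
  have hg0 : ∀ x, 0 ≤ g x := fun x => abs_nonneg _
  have hgeq : ∀ x ∈ Icc (0:ℝ) B, g x = |f x| := by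
    intro x hx
    simp [hgdef, IccExtend_of_mem hB.le _ hx]
    rfl
  set F : ℝ → ℝ := fun ξ => ∫ t in (0:ℝ)..ξ, g t with hFdef
  have hF' : ∀ x : ℝ, HasDerivAt F (g x) x := by
    intro x
    exact intervalIntegral.integral_hasDerivAt_right (hgc.intervalIntegrable _ _)
      (hgc.stronglyMeasurableAtFilter _ _) hgc.continuousAt
  have hFnonneg : ∀ x ∈ Icc (0:ℝ) B, 0 ≤ F x := by
    intro x hx
    exact intervalIntegral.integral_nonneg hx.1 (fun t _ => hg0 t)
  set K : ℝ := B / |l| with hK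
  have hlpos : 0 < |l| := abs_pos.mpr hl
  -- key bound
  have key : ∀ ξ ∈ Icc (0:ℝ) B, g ξ ≤ K * F ξ := by
    intro ξ hξ
    have h1 : |l| * g ξ ≤ B * F ξ := by
      rw [hgeq ξ hξ, ← abs_mul, heig ξ hξ]
      calc |∫ x in (0:ℝ)..ξ, (ξ - x) * f x| ≤ ∫ x in (0:ℝ)..ξ, B * g x := by
            have hb : |∫ x in (0:ℝ)..ξ, (ξ - x) * f x| ≤ |∫ x in (0:ℝ)..ξ, B * g x| := by
              simp only [← Real.norm_eq_abs]
              rw [Real.norm_eq_abs (∫ x in (0:ℝ)..ξ, B * g x)]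
              apply intervalIntegral.norm_integral_le_abs_of_norm_le
              · filter_upwards [ae_restrict_mem measurableSet_uIoc] with t ht
                rw [uIoc_of_le hξ.1] at ht
                have ht' : t ∈ Icc (0:ℝ) B := ⟨le_of_lt ht.1, ht.2.trans hξ.2⟩
                rw [hgeq t ht', Real.norm_eq_abs, abs_mul]
                have hle : |ξ - t| ≤ B := by
                  rw [abs_of_nonneg (by linarith [ht.2] : (0:ℝ) ≤ ξ - t)]
                  linarith [ht.1, hξ.2]
                exact mul_le_mul_of_nonneg_right hle (abs_nonneg _)
              · exact (continuous_const.mul hgc).intervalIntegrable _ _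
            refine hb.trans (le_of_eq (abs_of_nonneg ?_))
            exact intervalIntegral.integral_nonneg hξ.1 (fun t _ => mul_nonneg hB.le (hg0 t))
        _ = B * F ξ := intervalIntegral.integral_const_mul _ _
    rw [hK, div_mul_eq_mul_div, le_div_iff₀ hlpos, mul_comm]
    linarith
  -- Gronwall
  have hFzero : ∀ x ∈ Icc (0:ℝ) B, F x = 0 := by
    have grw := norm_le_gronwallBound_of_norm_deriv_right_le
      (f := F) (f' := g) (δ := 0) (K := K) (ε := 0) (a := 0) (b := B)
      (fun x _ => (hF' x).continuousAt.continuousWithinAt)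
      (fun x _ => (hF' x).hasDerivWithinAt)
      (by simp [hFdef])
      (fun x hx => by
        have hx' : x ∈ Icc (0:ℝ) B := ⟨hx.1, hx.2.le⟩
        rw [Real.norm_eq_abs, Real.norm_eq_abs, abs_of_nonneg (hg0 x),
          abs_of_nonneg (hFnonneg x hx')]
        linarith [key x hx'])
    intro x hx
    have := grw x hx
    rw [gronwallBound_ε0, Real.norm_eq_abs] at this
    simp at this
    linarith [le_abs_self (F x), neg_abs_le (F x), this]
  -- conclude
  intro ξ hξ
  have h1 := key ξ hξ
  rw [hFzero ξ hξ, mul_zero] at h1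
  have h2 : g ξ = 0 := le_antisymm h1 (hg0 ξ)
  rw [hgeq ξ hξ] at h2
  exact abs_eq_zero.mp h2
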